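/- Let σ be a d × d diagonal density matrix (d ≥ 2) whose largest diagonal entry σ_{i₁ i₁} satisfies σ_{i₁ i₁} ≥ 3/4, and let i₂ ≠ i₁ be any other index. Fix 0 < ε ≤ 1/2 and u ∈ {+1, −1}, and let σ^u be the Hermitian matrix that agrees with σ everywhere except on the principal 2 × 2 submatrix indexed by {i₁, i₂}, where σ^u_{i₁ i₁} = σ_{i₁ i₁} − ε², σ^u_{i₂ i₂} = σ_{i₂ i₂} + ε², and σ^u_{i₁ i₂} = σ^u_{i₂ i₁} = (ε/2)·u. Then ‖σ − σ^u‖₁ ≥ ε and σ^u is a density matrix (positive semidefinite with trace 1). -/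

import Mathlib

open Matrix ComplexOrder

/-- The trace norm (Schatten-1 norm) of a complex matrix: `‖M‖₁ = Tr √(Mᴴ M)`. -/
noncomputable def traceNorm {m n : Type*} [Fintype m] [Fintype n] [DecidableEq n]
    (B : Matrix m n ℂ) : ℝ :=
  (((Matrix.posSemidef_conjTranspose_mul_self B).1.eigenvectorUnitary : Matrix n n ℂ) *
    Matrix.diagonal (((↑) : ℝ → ℂ) ∘ (√·) ∘ (Matrix.posSemidef_conjTranspose_mul_self B).1.eigenvalues) *
    (star (Matrix.posSemidef_conjTranspose_mul_self B).1.eigenvectorUnitary : Matrix n n ℂ)).trace.re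

set_option maxHeartbeats 2000000

/-- (Corner-case perturbation.) If the largest diagonal entry of
a diagonal density matrix `σ` is at least `3/4`, then for `0 < ε ≤ 1/2` and
`u ∈ {+1, −1}`, the perturbation `σ^u` (shifting `∓ε²` on the two diagonal entries
`i₁, i₂` and putting `(ε/2)u` on the off-diagonal pair) is a density matrix that
is `ε`-far from `σ` in trace norm. -/
theorem corner_perturbation_valid
    {d : ℕ} (lam : Fin d → ℝ) (hnn : ∀ i, 0 ≤ lam i) (hsum1 : ∑ i, lam i = 1)
    (i₁ i₂ : Fin d) (hne : i₂ ≠ i₁)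
    (hmax : ∀ i, lam i ≤ lam i₁) (hbig : 3 / 4 ≤ lam i₁)
    (ε : ℝ) (hε : 0 < ε) (hεle : ε ≤ 1 / 2)
    (u : ℝ) (hu : u = 1 ∨ u = -1)
    (σ σu : Matrix (Fin d) (Fin d) ℂ)
    (hσ : σ = Matrix.diagonal (fun i => (lam i : ℂ)))
    (hσu : ∀ a b : Fin d, σu a b =
      if a = i₁ ∧ b = i₁ then ((lam i₁ - ε ^ 2 : ℝ) : ℂ)
      else if a = i₂ ∧ b = i₂ then ((lam i₂ + ε ^ 2 : ℝ) : ℂ)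
      else if (a = i₁ ∧ b = i₂) ∨ (a = i₂ ∧ b = i₁) then ((ε / 2 * u : ℝ) : ℂ)
      else σ a b) :
    ε ≤ traceNorm (σ - σu) ∧ σu.PosSemidef ∧ σu.trace = 1 := by
  have hu2 : u ^ 2 = 1 := by rcases hu with h | h <;> rw [h] <;> norm_num
  have hu2C : (u : ℂ) ^ 2 = 1 := by exact_mod_cast hu2
  have hε2 : ε ^ 2 ≤ 1 / 4 := by nlinarith
  have hne' : i₁ ≠ i₂ := Ne.symm hne
  -- The difference matrix
  have hM : σ - σu =
      single i₁ i₁ ((ε ^ 2 : ℝ) : ℂ) + single i₂ i₂ ((-ε ^ 2 : ℝ) : ℂ)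
      + single i₁ i₂ ((-(ε / 2 * u) : ℝ) : ℂ)
      + single i₂ i₁ ((-(ε / 2 * u) : ℝ) : ℂ) := by
    ext x y
    simp only [Matrix.sub_apply, Matrix.add_apply, hσu x y, hσ, Matrix.diagonal_apply,
      Matrix.single, Matrix.of_apply]
    clear * - hne hne'
    by_cases hx1 : x = i₁ <;> by_cases hx2 : x = i₂ <;> by_cases hy1 : y = i₁ <;>
      by_cases hy2 : y = i₂ <;> simp_all [eq_comm] <;> push_cast <;> ring
  have hMH : (σ - σu)ᴴ = σ - σu := by
    rw [hM]
    ext x y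
    simp only [Matrix.conjTranspose_apply, Matrix.add_apply, Matrix.single,
      Matrix.of_apply]
    clear * - hne hne'
    by_cases hx1 : x = i₁ <;> by_cases hx2 : x = i₂ <;> by_cases hy1 : y = i₁ <;>
      by_cases hy2 : y = i₂ <;>
      simp_all [Complex.ext_iff, eq_comm]
  have hMM : (σ - σu) * (σ - σu)
      = single i₁ i₁ ((ε ^ 4 + ε ^ 2 / 4 : ℝ) : ℂ)
      + single i₂ i₂ ((ε ^ 4 + ε ^ 2 / 4 : ℝ) : ℂ) := by
    have mul21 : ∀ (i l : Fin d) (c e : ℂ),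
        single i i₂ c * single i₁ l e = 0 :=
      fun i l c e => Matrix.single_mul_single_of_ne (c := c) i i₂ i₁ hne e
    have mul12 : ∀ (i l : Fin d) (c e : ℂ),
        single i i₁ c * single i₂ l e = 0 :=
      fun i l c e => Matrix.single_mul_single_of_ne (c := c) i i₁ i₂ hne' e
    rw [hM]
    simp only [add_mul, mul_add, Matrix.single_mul_single_same, mul21, mul12,
      add_zero, zero_add]
    ext x y
    simp only [Matrix.add_apply, Matrix.single, Matrix.of_apply]
    clear * - hne hne' hu2C
    by_cases hx1 : x = i₁ <;> by_cases hx2 : x = i₂ <;> by_cases hy1 : y = i₁ <;>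
      by_cases hy2 : y = i₂ <;> simp_all [eq_comm] <;> push_cast <;>
      first
        | ring1
        | linear_combination ((ε : ℂ) ^ 2 / 4) * hu2C
        | linear_combination (-(ε : ℂ) ^ 2 / 4) * hu2C
  set c : ℝ := Real.sqrt (ε ^ 4 + ε ^ 2 / 4) with hc
  have hcnn : 0 ≤ c := Real.sqrt_nonneg _
  have hcsq : c ^ 2 = ε ^ 4 + ε ^ 2 / 4 := Real.sq_sqrt (by positivity)
  set μ : Fin d → ℂ := fun i => if i = i₁ then (c : ℂ) else if i = i₂ then (c : ℂ) else 0
    with hμ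
  have hS : (Matrix.diagonal μ).PosSemidef := by
    refine Matrix.posSemidef_diagonal_iff.mpr fun i => ?_
    simp only [hμ]
    split_ifs <;> simp [Complex.zero_le_real, hcnn]
  have hccC : (c : ℂ) * c = ((ε ^ 4 + ε ^ 2 / 4 : ℝ) : ℂ) := by
    rw [← Complex.ofReal_mul]
    congr 1
    rw [← pow_two]
    exact hcsq
  have hSsq : Matrix.diagonal μ ^ 2 = (σ - σu)ᴴ * (σ - σu) := by
    rw [hMH, hMM, pow_two, Matrix.diagonal_mul_diagonal]
    ext x y
    simp only [Matrix.diagonal_apply, Pi.mul_apply, hμ, Matrix.add_apply,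
      Matrix.single, Matrix.of_apply]
    clear * - hne hne' hccC
    by_cases hx1 : x = i₁ <;> by_cases hx2 : x = i₂ <;> by_cases hy1 : y = i₁ <;>
      by_cases hy2 : y = i₂ <;> simp_all [hccC, eq_comm]
  have hsqrt : (Matrix.posSemidef_conjTranspose_mul_self (σ - σu)).1.cfc Real.sqrt =
      Matrix.diagonal μ := by
    open scoped MatrixOrder in
    (rw [← Matrix.IsHermitian.cfc_eq, ← hSsq]
     conv_rhs => rw [← CFC.sqrt_sq (Matrix.diagonal μ) hS.nonneg]
     rw [CFC.sqrt_eq_cfc, cfc_nnreal_eq_real _ _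
       (by rw [hSsq]; exact (Matrix.posSemidef_conjTranspose_mul_self (σ - σu)).nonneg)]
     congr 1; funext x; exact Real.sqrt.eq_1 x)
  have hsum : ∑ i, μ i = 2 * (c : ℂ) := by
    have h1 : ∀ i, μ i = (if i = i₁ then (c : ℂ) else 0) + (if i = i₂ then (c : ℂ) else 0) := by
      intro i
      simp only [hμ]
      clear * - hne hne'
      split_ifs with h h2 <;> simp_all
    rw [Finset.sum_congr rfl fun i _ => h1 i, Finset.sum_add_distrib]
    simp
    ring
  have htn : traceNorm (σ - σu) = 2 * c := by
    have e : traceNorm (σ - σu) =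
        ((Matrix.posSemidef_conjTranspose_mul_self (σ - σu)).1.cfc Real.sqrt).trace.re := by
      rw [traceNorm, Matrix.IsHermitian.cfc]; rfl
    rw [e, hsqrt, Matrix.trace_diagonal, hsum]
    simp [Complex.ofReal_re]
  have hεc : ε ≤ 2 * c := by
    have h1 : Real.sqrt (ε ^ 2 / 4) = ε / 2 := by
      rw [show ε ^ 2 / 4 = (ε / 2) ^ 2 by ring, Real.sqrt_sq (by linarith)]
    have h2 : Real.sqrt (ε ^ 2 / 4) ≤ c := Real.sqrt_le_sqrt (by linarith [pow_nonneg hε.le 4])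
    rw [h1] at h2
    linarith
  refine ⟨htn ▸ hεc, ?_, ?_⟩
  · -- positive semidefinite
    set ν : Fin d → ℝ := fun i => if i = i₁ then lam i₁ - ε ^ 2 - 1 / 4 else lam i with hν
    set v : Fin d → ℝ := fun i => if i = i₁ then 1 / 2 else if i = i₂ then ε * u else 0 with hv
    set V : Matrix (Fin d) Unit ℂ := Matrix.of (fun i _ => ((v i : ℝ) : ℂ)) with hV
    have hdec : σu = Matrix.diagonal (fun i => ((ν i : ℝ) : ℂ)) + V * Vᴴ := by
      ext x y
      have hVV : (V * Vᴴ) x y = ((v x : ℝ) : ℂ) * ((v y : ℝ) : ℂ) := by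
        simp [hV, Matrix.mul_apply, Matrix.conjTranspose_apply, Complex.conj_ofReal]
      rw [Matrix.add_apply, hVV, hσu x y]
      simp only [Matrix.diagonal_apply, hν, hv, hσ]
      clear * - hne hne' hu2C
      by_cases hx1 : x = i₁ <;> by_cases hx2 : x = i₂ <;> by_cases hy1 : y = i₁ <;>
        by_cases hy2 : y = i₂ <;> simp_all [eq_comm] <;> push_cast <;>
        first
          | ring1
          | linear_combination ((ε : ℂ) ^ 2) * hu2C
          | linear_combination (-(ε : ℂ) ^ 2) * hu2C
    rw [hdec]
    refine Matrix.PosSemidef.add ?_ (Matrix.posSemidef_self_mul_conjTranspose V)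
    refine Matrix.posSemidef_diagonal_iff.mpr fun i => ?_
    rw [Complex.zero_le_real]
    simp only [hν]
    split_ifs
    · linarith
    · exact hnn i
  · -- trace
    have h1 : ∀ i, σu i i =
        ((lam i + (if i = i₁ then -ε ^ 2 else 0) + (if i = i₂ then ε ^ 2 else 0) : ℝ) : ℂ) := by
      intro i
      rw [hσu i i, hσ]
      clear * - hne hne'
      by_cases h1 : i = i₁ <;> by_cases h2 : i = i₂ <;> simp_all [Matrix.diagonal_apply] <;> push_cast <;> ring
    have : σu.trace = ((∑ i, (lam i + (if i = i₁ then -ε ^ 2 else 0)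
        + (if i = i₂ then ε ^ 2 else 0)) : ℝ) : ℂ) := by
      rw [Matrix.trace, Complex.ofReal_sum]
      exact Finset.sum_congr rfl fun i _ => h1 i
    rw [this]
    rw [Finset.sum_add_distrib, Finset.sum_add_distrib, hsum1]
    simp
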